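/- Let π = ⟨a, b, c ∣ a², abab⁻², acac⁻²⟩ and let Π = ℤ[π]. If h ∈ Π satisfies h(a−1) = 0, h(−b²a + ba + b − 1) = 0 and h(−c²a + ca + c − 1) = 0, then h = 0. -/

import Mathlib

/-- The relators a², abab⁻², acac⁻² in the free group on three generators a, b, c. -/
def piRels : Set (FreeGroup (Fin 3)) :=
  {(FreeGroup.of 0) ^ 2,
   FreeGroup.of 0 * FreeGroup.of 1 * FreeGroup.of 0 * (FreeGroup.of 1)⁻¹ * (FreeGroup.of 1)⁻¹,
   FreeGroup.of 0 * FreeGroup.of 2 * FreeGroup.of 0 * (FreeGroup.of 2)⁻¹ * (FreeGroup.of 2)⁻¹}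

/-- π = ⟨a, b, c ∣ a², abab⁻², acac⁻²⟩. -/
abbrev piGroup := PresentedGroup piRels

/-- The integral group ring Π = ℤ[π]. -/
abbrev ZPi := MonoidAlgebra ℤ piGroup

/-- The canonical inclusion of group elements in the group ring. -/
noncomputable def og (g : piGroup) : ZPi := MonoidAlgebra.of ℤ piGroup g

/-- a, b, c as elements of Π. -/
noncomputable def aa : ZPi := og (PresentedGroup.of 0)
noncomputable def bb : ZPi := og (PresentedGroup.of 1)
noncomputable def cc : ZPi := og (PresentedGroup.of 2)

/-! ### A matrix representation of π -/

abbrev M2 := Matrix (Fin 2) (Fin 2) ℤ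

def uA : M2ˣ := ⟨!![0,1;1,0], !![0,1;1,0], by decide, by decide⟩
def uB : M2ˣ := ⟨!![0,-1;1,-1], !![-1,1;-1,0], by decide, by decide⟩
def uC : M2ˣ := ⟨!![0,1;-1,-1], !![-1,-1;1,0], by decide, by decide⟩

noncomputable def fRep : Fin 3 → M2ˣ := ![uA, uB, uC]

theorem fRep_rels : ∀ r ∈ piRels, FreeGroup.lift fRep r = 1 := by
  intro r hr
  rcases hr with rfl | rfl | rfl <;>
    · simp only [map_mul, map_inv, map_pow, FreeGroup.lift_apply_of, fRep]
      ext : 1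
      simp only [Units.val_mul, Units.val_pow_eq_pow_val, Units.val_inv_eq_inv_val,
        uA, uB, uC, Units.val_one]
      decide

noncomputable def phiRep : piGroup →* M2ˣ := PresentedGroup.toGroup fRep_rels

theorem pow_entries (n : ℕ) : 1 ≤ ((!![1,1;1,2] : M2) ^ (n+1)) 0 0 ∧
    (n+1 : ℤ) ≤ ((!![1,1;1,2] : M2) ^ (n+1)) 0 1 ∧
    (n+1 : ℤ) ≤ ((!![1,1;1,2] : M2) ^ (n+1)) 1 0 ∧
    (n+2 : ℤ) ≤ ((!![1,1;1,2] : M2) ^ (n+1)) 1 1 := by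
  induction n with
  | zero => norm_num [pow_one]
  | succ n ih =>
    obtain ⟨i1, i2, i3, i4⟩ := ih
    have e : (!![1,1;1,2] : M2) ^ (n+2) = (!![1,1;1,2] : M2) ^ (n+1) * !![1,1;1,2] := by
      rw [pow_succ]
    refine ⟨?_, ?_, ?_, ?_⟩ <;>
      · rw [e]; simp [Matrix.mul_apply, Fin.sum_univ_two]; omega

theorem notFinOrder_uBC : ¬ IsOfFinOrder (uB * uC) := by
  intro hf
  obtain ⟨n, hn, he⟩ := isOfFinOrder_iff_pow_eq_one.1 hf
  have hval : ((uB * uC : M2ˣ) : M2) ^ n = 1 := by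
    rw [← Units.val_pow_eq_pow_val, he, Units.val_one]
  have hbc : ((uB * uC : M2ˣ) : M2) = !![1,1;1,2] := by
    simp only [Units.val_mul, uB, uC]; decide
  rw [hbc] at hval
  obtain ⟨m, rfl⟩ : ∃ m, n = m + 1 := ⟨n - 1, by omega⟩
  have := (pow_entries m).2.1
  rw [hval] at this
  simp [Matrix.one_apply] at this
  omega

/-! ### Consequences in π -/

theorem mk_rel_eq_one {r : FreeGroup (Fin 3)} (hr : r ∈ piRels) :
    PresentedGroup.mk piRels r = 1 :=
  (QuotientGroup.eq_one_iff _).2 (Subgroup.subset_normalClosure hr)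

theorem relA : (PresentedGroup.of 0 : piGroup) * PresentedGroup.of 0 = 1 := by
  have h := mk_rel_eq_one (show (FreeGroup.of 0)^2 ∈ piRels by left; rfl)
  rw [map_pow] at h
  rw [← pow_two]
  exact h

theorem relB : (PresentedGroup.of 0 : piGroup) * PresentedGroup.of 1 * PresentedGroup.of 0 =
    PresentedGroup.of 1 * PresentedGroup.of 1 := by
  have h := mk_rel_eq_one (show FreeGroup.of 0 * FreeGroup.of 1 * FreeGroup.of 0 *
      (FreeGroup.of 1)⁻¹ * (FreeGroup.of 1)⁻¹ ∈ piRels by right; left; rfl)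
  simp only [map_mul, map_inv] at h
  show PresentedGroup.mk piRels (FreeGroup.of 0) * PresentedGroup.mk piRels (FreeGroup.of 1) *
      PresentedGroup.mk piRels (FreeGroup.of 0) =
    PresentedGroup.mk piRels (FreeGroup.of 1) * PresentedGroup.mk piRels (FreeGroup.of 1)
  calc PresentedGroup.mk piRels (FreeGroup.of 0) * PresentedGroup.mk piRels (FreeGroup.of 1) *
      PresentedGroup.mk piRels (FreeGroup.of 0)
      = (PresentedGroup.mk piRels (FreeGroup.of 0) * PresentedGroup.mk piRels (FreeGroup.of 1) *
          PresentedGroup.mk piRels (FreeGroup.of 0) *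
          (PresentedGroup.mk piRels (FreeGroup.of 1))⁻¹ *
          (PresentedGroup.mk piRels (FreeGroup.of 1))⁻¹) *
        (PresentedGroup.mk piRels (FreeGroup.of 1) *
          PresentedGroup.mk piRels (FreeGroup.of 1)) := by group
    _ = PresentedGroup.mk piRels (FreeGroup.of 1) * PresentedGroup.mk piRels (FreeGroup.of 1) := by
        rw [h, one_mul]

theorem relC : (PresentedGroup.of 0 : piGroup) * PresentedGroup.of 2 * PresentedGroup.of 0 =
    PresentedGroup.of 2 * PresentedGroup.of 2 := by
  have h := mk_rel_eq_one (show FreeGroup.of 0 * FreeGroup.of 2 * FreeGroup.of 0 *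
      (FreeGroup.of 2)⁻¹ * (FreeGroup.of 2)⁻¹ ∈ piRels by right; right; rfl)
  simp only [map_mul, map_inv] at h
  show PresentedGroup.mk piRels (FreeGroup.of 0) * PresentedGroup.mk piRels (FreeGroup.of 2) *
      PresentedGroup.mk piRels (FreeGroup.of 0) =
    PresentedGroup.mk piRels (FreeGroup.of 2) * PresentedGroup.mk piRels (FreeGroup.of 2)
  calc PresentedGroup.mk piRels (FreeGroup.of 0) * PresentedGroup.mk piRels (FreeGroup.of 2) *
      PresentedGroup.mk piRels (FreeGroup.of 0)
      = (PresentedGroup.mk piRels (FreeGroup.of 0) * PresentedGroup.mk piRels (FreeGroup.of 2) *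
          PresentedGroup.mk piRels (FreeGroup.of 0) *
          (PresentedGroup.mk piRels (FreeGroup.of 2))⁻¹ *
          (PresentedGroup.mk piRels (FreeGroup.of 2))⁻¹) *
        (PresentedGroup.mk piRels (FreeGroup.of 2) *
          PresentedGroup.mk piRels (FreeGroup.of 2)) := by group
    _ = PresentedGroup.mk piRels (FreeGroup.of 2) * PresentedGroup.mk piRels (FreeGroup.of 2) := by
        rw [h, one_mul]

theorem notFinOrder_BC :
    ¬ IsOfFinOrder ((PresentedGroup.of 1 : piGroup) * PresentedGroup.of 2) := by
  intro hf
  have hmap := MonoidHom.isOfFinOrder phiRep hf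
  rw [map_mul] at hmap
  have hB : phiRep (PresentedGroup.of 1) = uB := PresentedGroup.toGroup.of fRep_rels
  have hC : phiRep (PresentedGroup.of 2) = uC := PresentedGroup.toGroup.of fRep_rels
  rw [hB, hC] at hmap
  exact notFinOrder_uBC hmap

/-! ### The main theorem -/

/-- If h ∈ Π = ℤ[π] satisfies h(a−1) = 0, h(−b²a + ba + b − 1) = 0 and
h(−c²a + ca + c − 1) = 0, then h = 0. -/
theorem annihilator_of_theta_trivial (h : ZPi)
    (h1 : h * (aa - 1) = 0)
    (h2 : h * (-(bb ^ 2 * aa) + bb * aa + bb - 1) = 0)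
    (h3 : h * (-(cc ^ 2 * aa) + cc * aa + cc - 1) = 0) :
    h = 0 := by
  have ogmul : ∀ g₁ g₂ : piGroup, og (g₁ * g₂) = og g₁ * og g₂ := fun g₁ g₂ => map_mul _ _ _
  have og1 : og (1 : piGroup) = 1 := map_one (MonoidAlgebra.of ℤ piGroup)
  have haa : h * aa = h := by
    have e : h * aa - h = 0 := by rw [← h1]; noncomm_ring
    exact sub_eq_zero.1 e
  have hA2 : aa * aa = 1 := by
    rw [aa, ← ogmul, relA, og1]
  -- b² a = a b  and  c² a = a c
  have hb2a : bb ^ 2 * aa = aa * bb := by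
    rw [pow_two, aa, bb, ← ogmul, ← ogmul, ← ogmul]
    congr 1
    calc (PresentedGroup.of 1 : piGroup) * PresentedGroup.of 1 * PresentedGroup.of 0
        = PresentedGroup.of 0 * PresentedGroup.of 1 * PresentedGroup.of 0 *
            PresentedGroup.of 0 := by rw [relB]
      _ = PresentedGroup.of 0 * PresentedGroup.of 1 *
            (PresentedGroup.of 0 * PresentedGroup.of 0) := by rw [mul_assoc]
      _ = PresentedGroup.of 0 * PresentedGroup.of 1 := by rw [relA, mul_one]
  have hc2a : cc ^ 2 * aa = aa * cc := by
    rw [pow_two, aa, cc, ← ogmul, ← ogmul, ← ogmul]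
    congr 1
    calc (PresentedGroup.of 2 : piGroup) * PresentedGroup.of 2 * PresentedGroup.of 0
        = PresentedGroup.of 0 * PresentedGroup.of 2 * PresentedGroup.of 0 *
            PresentedGroup.of 0 := by rw [relC]
      _ = PresentedGroup.of 0 * PresentedGroup.of 2 *
            (PresentedGroup.of 0 * PresentedGroup.of 0) := by rw [mul_assoc]
      _ = PresentedGroup.of 0 * PresentedGroup.of 2 := by rw [relA, mul_one]
  -- from h2 : h * (b a) = h, hence h * b = h
  have hba : h * (bb * aa) = h := by
    have e : h * (-(bb ^ 2 * aa) + bb * aa + bb - 1)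
        = h * (bb * aa) - h + (h * bb - h * (bb ^ 2 * aa)) := by noncomm_ring
    have e2 : h * (bb ^ 2 * aa) = h * bb := by
      rw [hb2a, ← mul_assoc, haa]
    rw [e, e2, sub_self, add_zero] at h2
    exact sub_eq_zero.1 h2
  have hb : h * bb = h := by
    have e := congrArg (· * aa) hba
    simp only [mul_assoc] at e
    rw [hA2, mul_one] at e
    rw [e, haa]
  have hca : h * (cc * aa) = h := by
    have e : h * (-(cc ^ 2 * aa) + cc * aa + cc - 1)
        = h * (cc * aa) - h + (h * cc - h * (cc ^ 2 * aa)) := by noncomm_ring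
    have e2 : h * (cc ^ 2 * aa) = h * cc := by
      rw [hc2a, ← mul_assoc, haa]
    rw [e, e2, sub_self, add_zero] at h3
    exact sub_eq_zero.1 h3
  have hc : h * cc = h := by
    have e := congrArg (· * aa) hca
    simp only [mul_assoc] at e
    rw [hA2, mul_one] at e
    rw [e, haa]
  -- hence h is invariant under right multiplication by g = B*C
  set g : piGroup := PresentedGroup.of 1 * PresentedGroup.of 2 with hg
  have hbc : h * og g = h := by
    rw [hg, ogmul, ← mul_assoc, ← bb, ← cc, hb, hc]
  have hpow : ∀ n : ℕ, h * og (g ^ n) = h := by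
    intro n
    induction n with
    | zero => rw [pow_zero, og1, mul_one]
    | succ n ih => rw [pow_succ, ogmul, ← mul_assoc, ih, hbc]
  -- support argument
  by_contra hne
  obtain ⟨x, hx⟩ := Finsupp.support_nonempty_iff.2 (fun e => hne (MonoidAlgebra.coeff_eq_zero.1 e))
  have hxne : h.coeff x ≠ 0 := Finsupp.mem_support_iff.1 hx
  have hmem : ∀ n : ℕ, x * g ^ n ∈ h.coeff.support := by
    intro n
    rw [Finsupp.mem_support_iff]
    have e : h.coeff (x * g ^ n) = (h * og (g ^ n)).coeff (x * g ^ n) := by rw [hpow n]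
    rw [e, og, MonoidAlgebra.of_apply, MonoidAlgebra.coeff_mul_single_apply,
      mul_inv_cancel_right, mul_one]
    exact hxne
  have hginf : ¬ IsOfFinOrder g := notFinOrder_BC
  have hinj : Function.Injective (fun n : ℕ => x * g ^ n) := by
    intro m n hmn
    exact injective_pow_iff_not_isOfFinOrder.2 hginf (mul_left_cancel hmn)
  have hinfinite : (Set.range fun n : ℕ => x * g ^ n).Infinite :=
    Set.infinite_range_of_injective hinj
  refine hinfinite (Set.Finite.subset h.coeff.support.finite_toSet ?_)
  rintro y ⟨n, rfl⟩
  exact hmem n
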